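/- arXiv:1103.3801 — 3 statements merged into one kernel-verified Lean document; each statement's English description precedes it below -/
import Mathlib

section
/- Let f : ℝ → ℝ be differentiable on [x₀, b] with f' Lipschitz with constant L there, let m ≥ L, and suppose f(x₀) > 0. Then f(x) > 0 for every x in [x₀, x̄) ∩ [x₀, b], where x̄ = x₀ + (f'(x₀) + √(f'(x₀)² + 2m·f(x₀)))/m. In particular, any root of f in [x₀, b] satisfies x ≥ x̄. -/
theorem safe_step_no_root (f f' : ℝ → ℝ) (x₀ b L m : ℝ)
    (hderiv : ∀ x ∈ Set.Icc x₀ b, HasDerivAt f (f' x) x)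
    (hlip : ∀ x ∈ Set.Icc x₀ b, ∀ y ∈ Set.Icc x₀ b, |f' x - f' y| ≤ L * |x - y|)
    (hm : L ≤ m) (hf₀ : 0 < f x₀) :
    let xbar : ℝ := x₀ + (f' x₀ + Real.sqrt ((f' x₀) ^ 2 + 2 * m * f x₀)) / m
    (∀ x ∈ Set.Ico x₀ xbar ∩ Set.Icc x₀ b, 0 < f x) ∧
      ∀ x ∈ Set.Icc x₀ b, f x = 0 → xbar ≤ x := by
  intro xbar
  have key : ∀ x ∈ Set.Ico x₀ xbar ∩ Set.Icc x₀ b, 0 < f x := by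
    rintro x ⟨⟨hx0, hxbar⟩, hxb⟩
    rcases eq_or_lt_of_le hx0 with heq | hlt
    · rwa [← heq]
    -- x₀ < x ≤ b
    have hx₀mem : x₀ ∈ Set.Icc x₀ b := ⟨le_refl _, le_trans hx0 hxb.2⟩
    have hL0 : 0 ≤ L := by
      have h := hlip x hxb x₀ hx₀mem
      have habs : 0 < |x - x₀| := abs_pos.mpr (by linarith)
      nlinarith [abs_nonneg (f' x - f' x₀)]
    have hm0 : 0 ≤ m := le_trans hL0 hm
    rcases eq_or_lt_of_le hm0 with hmeq | hmpos
    · exfalso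
      have : xbar = x₀ := by simp [xbar, ← hmeq]
      rw [this] at hxbar; linarith
    -- m > 0
    set a := f' x₀ with ha
    set g : ℝ → ℝ := fun t => f t - (f x₀ + a * (t - x₀) - m / 2 * (t - x₀) ^ 2) with hgdef
    have hg : ∀ t ∈ Set.Icc x₀ b, HasDerivAt g (f' t - (a - m * (t - x₀))) t := by
      intro t ht
      have h1 : HasDerivAt (fun t : ℝ => t - x₀) 1 t := (hasDerivAt_id t).sub_const x₀
      have h2 := h1.const_mul a
      have h3 := (h1.pow 2).const_mul (m / 2)
      have h4 := ((hasDerivAt_const t (f x₀)).add h2).sub h3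
      have h5 := (hderiv t ht).sub h4
      refine h5.congr_deriv ?_
      ring
    have mono : MonotoneOn g (Set.Icc x₀ b) := by
      apply monotoneOn_of_deriv_nonneg (convex_Icc _ _)
      · exact fun t ht => (hg t ht).continuousAt.continuousWithinAt
      · intro t ht
        rw [interior_Icc] at ht
        exact ((hg t ⟨le_of_lt ht.1, le_of_lt ht.2⟩).differentiableAt).differentiableWithinAt
      · intro t ht
        rw [interior_Icc] at ht
        have htmem : t ∈ Set.Icc x₀ b := ⟨le_of_lt ht.1, le_of_lt ht.2⟩
        rw [(hg t htmem).deriv]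
        have hl := hlip t htmem x₀ hx₀mem
        rw [abs_of_nonneg (by linarith [ht.1] : (0:ℝ) ≤ t - x₀)] at hl
        have := abs_le.mp hl
        nlinarith [ht.1, this.1]
    have hgx : g x₀ ≤ g x := mono hx₀mem hxb hx0
    have hgx₀ : g x₀ = 0 := by simp [hgdef]
    have htay : f x₀ + a * (x - x₀) - m / 2 * (x - x₀) ^ 2 ≤ f x := by
      have := hgx; rw [hgx₀] at this; simp [hgdef] at this; linarith
    set s := Real.sqrt (a ^ 2 + 2 * m * f x₀) with hs
    have hs0 : 0 ≤ s := Real.sqrt_nonneg _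
    have hs2 : s ^ 2 = a ^ 2 + 2 * m * f x₀ := Real.sq_sqrt (by nlinarith)
    have hxx : (x - x₀) * m < a + s := by
      have : x - x₀ < (a + s) / m := by
        have := hxbar
        simp only [xbar] at this
        linarith
      exact (lt_div_iff₀ hmpos).mp this
    have hsa : a < s := by nlinarith
    nlinarith [htay, hsa, hs2, hxx, hmpos, mul_pos (sub_pos.mpr hlt) hmpos,
      mul_pos (show (0:ℝ) < s - ((x - x₀) * m - a) by linarith)
        (show (0:ℝ) < s + ((x - x₀) * m - a) by nlinarith)]
  refine ⟨key, fun x hx hfx => ?_⟩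
  by_contra h
  push_neg at h
  exact (key x ⟨⟨hx.1, h⟩, hx⟩).ne' hfx
end

section
/- Let f : [x₀,x₁] → ℝ be differentiable with f' Lipschitz of constant L, m ≥ L, m > 0, and let φ be the auxiliary function of (11) built with parameter m. If min{φ(x) : x ∈ [x₀,x₁]} > 0, then f(x) > 0 for all x ∈ [x₀, x₁]; in particular f has no root in [x₀, x₁]. -/
set_option maxHeartbeats 1000000

lemma mono_aux (f f' : ℝ → ℝ) (B C a b : ℝ)
    (hd : ∀ x ∈ Set.Icc a b, HasDerivAt f (f' x) x)
    (h0 : ∀ x ∈ Set.Icc a b, 0 ≤ f' x + (B + 2*C*x)) :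
    MonotoneOn (fun t => f t + (B*t + C*t^2)) (Set.Icc a b) := by
  have hq : ∀ t : ℝ, HasDerivAt (fun s : ℝ => B*s + C*s^2) (B + 2*C*t) t := by
    intro t
    have h2 : HasDerivAt (fun s : ℝ => s^2) (2*t) t := by simpa using hasDerivAt_pow 2 t
    have h3 := ((hasDerivAt_id t).const_mul B).add (h2.const_mul C)
    exact h3.congr_deriv (by ring)
  apply monotoneOn_of_deriv_nonneg (convex_Icc a b)
  · intro x hx; exact (((hd x hx).add (hq x)).continuousAt).continuousWithinAt
  · intro x hx
    rw [interior_Icc] at hx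
    exact (((hd x (Set.mem_Icc_of_Ioo hx)).add (hq x)).differentiableAt).differentiableWithinAt
  · intro x hx
    rw [interior_Icc] at hx
    rw [show deriv (fun t => f t + (B * t + C * t ^ 2)) x = f' x + (B + 2*C*x) from ((hd x (Set.mem_Icc_of_Ioo hx)).add (hq x)).deriv]
    exact h0 x (Set.mem_Icc_of_Ioo hx)

theorem positive_characteristic_no_root (f f' : ℝ → ℝ) (x₀ x₁ L m y y' bq cq : ℝ)
    (hx : x₀ < x₁)
    (hderiv : ∀ x ∈ Set.Icc x₀ x₁, HasDerivAt f (f' x) x)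
    (hlip : ∀ x ∈ Set.Icc x₀ x₁, ∀ z ∈ Set.Icc x₀ x₁, |f' x - f' z| ≤ L * |x - z|)
    (hm : L ≤ m) (hm0 : 0 < m)
    (hy : y = (x₁ - x₀) / 4 + (f' x₁ - f' x₀) / (4 * m) +
      (f x₀ - f x₁ + f' x₁ * x₁ - f' x₀ * x₀ + m / 2 * (x₁ ^ 2 - x₀ ^ 2)) /
        (m * (x₁ - x₀) + f' x₁ - f' x₀))
    (hy' : y' = -(x₁ - x₀) / 4 - (f' x₁ - f' x₀) / (4 * m) +
      (f x₀ - f x₁ + f' x₁ * x₁ - f' x₀ * x₀ + m / 2 * (x₁ ^ 2 - x₀ ^ 2)) /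
        (m * (x₁ - x₀) + f' x₁ - f' x₀))
    (hb : bq = f' x₁ - 2 * m * y + m * x₁)
    (hc : cq = f x₁ - f' x₁ * x₁ - m / 2 * x₁ ^ 2 + m * y ^ 2)
    (hpos : ∀ x ∈ Set.Icc x₀ x₁,
      0 < (if x ≤ y' then f x₀ + f' x₀ * (x - x₀) - m / 2 * (x - x₀) ^ 2
           else if x ≤ y then m / 2 * x ^ 2 + bq * x + cq
           else f x₁ - f' x₁ * (x₁ - x) - m / 2 * (x₁ - x) ^ 2)) :
    (∀ x ∈ Set.Icc x₀ x₁, 0 < f x) ∧ ¬ ∃ x ∈ Set.Icc x₀ x₁, f x = 0 := by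
  have hx₀ : x₀ ∈ Set.Icc x₀ x₁ := Set.left_mem_Icc.2 hx.le
  have hx₁ : x₁ ∈ Set.Icc x₀ x₁ := Set.right_mem_Icc.2 hx.le
  -- Lipschitz consequences
  have hlip' : ∀ u ∈ Set.Icc x₀ x₁, ∀ v ∈ Set.Icc x₀ x₁, u ≤ v →
      f' v - f' u ≤ m * (v - u) ∧ f' u - f' v ≤ m * (v - u) := by
    intro u hu v hv huv
    have h := hlip u hu v hv
    have h1 : |u - v| = v - u := by rw [abs_sub_comm]; exact abs_of_nonneg (by linarith)
    rw [h1] at h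
    have h2 : L * (v - u) ≤ m * (v - u) := mul_le_mul_of_nonneg_right hm (by linarith)
    have h3 : |f' u - f' v| ≤ m * (v - u) := h.trans h2
    constructor
    · linarith [neg_abs_le (f' u - f' v)]
    · linarith [le_abs_self (f' u - f' v)]
  -- four Taylor-type bounds
  have key1 : ∀ x ∈ Set.Icc x₀ x₁,
      f x₀ + f' x₀ * (x - x₀) - m / 2 * (x - x₀) ^ 2 ≤ f x := by
    intro x hxm
    have hmono := mono_aux f f' (-(f' x₀) - m * x₀) (m/2) x₀ x₁ hderiv (by
      intro t ht
      have := (hlip' x₀ hx₀ t ht ht.1).2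
      linarith)
    have := hmono hx₀ hxm hxm.1
    simp only at this
    linarith [this]
  have key2 : ∀ x ∈ Set.Icc x₀ x₁,
      f x₁ - f' x₁ * (x₁ - x) - m / 2 * (x₁ - x) ^ 2 ≤ f x := by
    intro x hxm
    have hmono := mono_aux (fun t => -f t) (fun t => -f' t) (f' x₁ + m * x₁) (-(m/2)) x₀ x₁
      (fun t ht => (hderiv t ht).neg) (by
        intro t ht
        have := (hlip' t ht x₁ hx₁ ht.2).2
        linarith)
    have := hmono hxm hx₁ hxm.2
    simp only at this
    linarith [this]
  have key3 : ∀ x ∈ Set.Icc x₀ x₁,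
      f x ≤ f x₀ + f' x₀ * (x - x₀) + m / 2 * (x - x₀) ^ 2 := by
    intro x hxm
    have hmono := mono_aux (fun t => -f t) (fun t => -f' t) (f' x₀ - m * x₀) (m/2) x₀ x₁
      (fun t ht => (hderiv t ht).neg) (by
        intro t ht
        have := (hlip' x₀ hx₀ t ht ht.1).1
        linarith)
    have := hmono hx₀ hxm hxm.1
    simp only at this
    linarith [this]
  have key4 : ∀ x ∈ Set.Icc x₀ x₁,
      f x ≤ f x₁ - f' x₁ * (x₁ - x) + m / 2 * (x₁ - x) ^ 2 := by
    intro x hxm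
    have hmono := mono_aux f f' (-(f' x₁) + m * x₁) (-(m/2)) x₀ x₁ hderiv (by
      intro t ht
      have := (hlip' t ht x₁ hx₁ ht.2).1
      linarith)
    have := hmono hxm hx₁ hxm.2
    simp only at this
    linarith [this]
  -- concavity of f - q
  have hqd : ∀ t : ℝ, HasDerivAt (fun s : ℝ => m/2*s^2 + bq*s + cq) (m*t + bq) t := by
    intro t
    have hp : HasDerivAt (fun s : ℝ => s^2) (2*t) t := by simpa using hasDerivAt_pow 2 t
    have h3 := ((hp.const_mul (m/2)).add ((hasDerivAt_id t).const_mul bq)).add_const cq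
    exact h3.congr_deriv (by ring)
  have hg : ∀ t ∈ Set.Icc x₀ x₁,
      HasDerivAt (fun s => f s - (m/2*s^2 + bq*s + cq)) (f' t - (m*t + bq)) t :=
    fun t ht => (hderiv t ht).sub (hqd t)
  have hconc : ConcaveOn ℝ (Set.Icc x₀ x₁) (fun s => f s - (m/2*s^2 + bq*s + cq)) := by
    apply AntitoneOn.concaveOn_of_deriv (convex_Icc x₀ x₁)
    · intro t ht; exact (hg t ht).continuousAt.continuousWithinAt
    · intro t ht
      rw [interior_Icc] at ht
      exact (hg t (Set.mem_Icc_of_Ioo ht)).differentiableAt.differentiableWithinAt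
    · intro u hu v hv huv
      rw [interior_Icc] at hu hv
      rw [(hg u (Set.mem_Icc_of_Ioo hu)).deriv, (hg v (Set.mem_Icc_of_Ioo hv)).deriv]
      have := (hlip' u (Set.mem_Icc_of_Ioo hu) v (Set.mem_Icc_of_Ioo hv) huv).1
      linarith
  have main : ∀ x ∈ Set.Icc x₀ x₁, 0 < f x := by
    intro x hxm
    have hphi := hpos x hxm
    by_cases h1 : x ≤ y'
    · rw [if_pos h1] at hphi; exact lt_of_lt_of_le hphi (key1 x hxm)
    by_cases h2 : x ≤ y
    swap
    · rw [if_neg h1, if_neg h2] at hphi; exact lt_of_lt_of_le hphi (key2 x hxm)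
    rw [if_neg h1, if_pos h2] at hphi
    have hD0 : 0 ≤ m * (x₁ - x₀) + f' x₁ - f' x₀ := by
      have := (hlip' x₀ hx₀ x₁ hx₁ hx.le).2; linarith
    rcases hD0.eq_or_lt with hD | hD
    · exfalso
      have hden : m * (x₁ - x₀) + f' x₁ - f' x₀ = 0 := hD.symm
      have hdelta : f' x₁ - f' x₀ = -(m * (x₁ - x₀)) := by linarith
      have hyy' : y = y' := by
        rw [hy, hy', hden, div_zero, hdelta]
        field_simp
        ring
      exact h1 (hyy' ▸ h2)
    have hDne : m * (x₁ - x₀) + f' x₁ - f' x₀ ≠ 0 := ne_of_gt hD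
    obtain ⟨s, hs⟩ : ∃ s : ℝ, s = (m * (x₁ - x₀) + f' x₁ - f' x₀) / (2*m) := ⟨_, rfl⟩
    have hms : m * s = (m * (x₁ - x₀) + f' x₁ - f' x₀) / 2 := by
      rw [hs]; field_simp
    have hs0 : 0 ≤ s := hs ▸ div_nonneg hD.le (by linarith)
    have hsd : s ≤ x₁ - x₀ := by
      have h6 := (hlip' x₀ hx₀ x₁ hx₁ hx.le).1
      nlinarith [hms, hm0, h6]
    have hDm : (x₁ - x₀)/4 + (f' x₁ - f' x₀)/(4*m) =
        (m * (x₁ - x₀) + f' x₁ - f' x₀)/(4*m) := by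
      field_simp; ring
    -- the A bound : D^2 ≤ 4mA
    have hA : (m * (x₁ - x₀) + f' x₁ - f' x₀) * (m * (x₁ - x₀) + f' x₁ - f' x₀) ≤
        4*m*(f x₁ - f x₀ - f' x₀ * (x₁ - x₀) + m/2*(x₁-x₀)^2) := by
      have htm : x₁ - s ∈ Set.Icc x₀ x₁ := ⟨by linarith, by linarith⟩
      have k1 := key1 _ htm
      have k4 := key4 _ htm
      have h7 : s*(m * (x₁ - x₀) + f' x₁ - f' x₀) - m*s^2 ≤
          f x₁ - f x₀ - f' x₀ * (x₁ - x₀) + m/2*(x₁-x₀)^2 := by linarith [k1, k4]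
      have h8 := mul_le_mul_of_nonneg_left h7 (by positivity : (0:ℝ) ≤ 4*m)
      have e1 : 4*(m*s)*(m * (x₁ - x₀) + f' x₁ - f' x₀) =
          2*((m * (x₁ - x₀) + f' x₁ - f' x₀)*(m * (x₁ - x₀) + f' x₁ - f' x₀)) := by
        rw [hms]; ring
      have e2 : 4*(m*s)*(m*s) =
          (m * (x₁ - x₀) + f' x₁ - f' x₀)*(m * (x₁ - x₀) + f' x₁ - f' x₀) := by
        rw [hms]; ring
      linarith [h8, e1, e2]
    -- the B bound
    have hB : (m * (x₁ - x₀) + f' x₁ - f' x₀) * (m * (x₁ - x₀) + f' x₁ - f' x₀) ≤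
        4*m*(f x₀ - f x₁ + f' x₁ * (x₁ - x₀) + m/2*(x₁-x₀)^2) := by
      have htm : x₀ + s ∈ Set.Icc x₀ x₁ := ⟨by linarith, by linarith⟩
      have k2 := key2 _ htm
      have k3 := key3 _ htm
      have h7 : s*(m * (x₁ - x₀) + f' x₁ - f' x₀) - m*s^2 ≤
          f x₀ - f x₁ + f' x₁ * (x₁ - x₀) + m/2*(x₁-x₀)^2 := by linarith [k2, k3]
      have h8 := mul_le_mul_of_nonneg_left h7 (by positivity : (0:ℝ) ≤ 4*m)
      have e1 : 4*(m*s)*(m * (x₁ - x₀) + f' x₁ - f' x₀) =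
          2*((m * (x₁ - x₀) + f' x₁ - f' x₀)*(m * (x₁ - x₀) + f' x₁ - f' x₀)) := by
        rw [hms]; ring
      have e2 : 4*(m*s)*(m*s) =
          (m * (x₁ - x₀) + f' x₁ - f' x₀)*(m * (x₁ - x₀) + f' x₁ - f' x₀) := by
        rw [hms]; ring
      linarith [h8, e1, e2]
    have hyle : y ≤ x₁ := by
      rw [hy]
      have hrw : (f x₀ - f x₁ + f' x₁ * x₁ - f' x₀ * x₀ + m / 2 * (x₁ ^ 2 - x₀ ^ 2)) /
          (m * (x₁ - x₀) + f' x₁ - f' x₀) =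
          x₁ - (f x₁ - f x₀ - f' x₀ * (x₁ - x₀) + m/2*(x₁-x₀)^2) /
            (m * (x₁ - x₀) + f' x₁ - f' x₀) := by
        field_simp
        ring
      rw [hrw]
      have hAD : (m * (x₁ - x₀) + f' x₁ - f' x₀)/(4*m) ≤
          (f x₁ - f x₀ - f' x₀ * (x₁ - x₀) + m/2*(x₁-x₀)^2) /
            (m * (x₁ - x₀) + f' x₁ - f' x₀) := by
        rw [div_le_div_iff₀ (by linarith : (0:ℝ) < 4*m) hD]
        nlinarith [hA]
      linarith [hAD, hDm]
    have hy'ge : x₀ ≤ y' := by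
      rw [hy']
      have hrw : (f x₀ - f x₁ + f' x₁ * x₁ - f' x₀ * x₀ + m / 2 * (x₁ ^ 2 - x₀ ^ 2)) /
          (m * (x₁ - x₀) + f' x₁ - f' x₀) =
          x₀ + (f x₀ - f x₁ + f' x₁ * (x₁ - x₀) + m/2*(x₁-x₀)^2) /
            (m * (x₁ - x₀) + f' x₁ - f' x₀) := by
        field_simp
        ring
      rw [hrw]
      have hBD : (m * (x₁ - x₀) + f' x₁ - f' x₀)/(4*m) ≤
          (f x₀ - f x₁ + f' x₁ * (x₁ - x₀) + m/2*(x₁-x₀)^2) /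
            (m * (x₁ - x₀) + f' x₁ - f' x₀) := by
        rw [div_le_div_iff₀ (by linarith : (0:ℝ) < 4*m) hD]
        nlinarith [hB]
      linarith [hBD, hDm]
    have hylt : y' < y := by
      have hpos' : 0 < (m * (x₁ - x₀) + f' x₁ - f' x₀)/(4*m) :=
        div_pos hD (by linarith)
      rw [hy, hy']
      linarith [hDm, hpos']
    have hy'm : y' ∈ Set.Icc x₀ x₁ := ⟨hy'ge, le_trans hylt.le hyle⟩
    have hym : y ∈ Set.Icc x₀ x₁ := ⟨le_trans hy'ge hylt.le, hyle⟩
    have hqy : m/2*y^2 + bq*y + cq = f x₁ - f' x₁*(x₁ - y) - m/2*(x₁ - y)^2 := by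
      rw [hb, hc]; ring
    have hhy : 0 ≤ f y - (m/2*y^2 + bq*y + cq) := by
      rw [hqy]; linarith [key2 y hym]
    have h5 : 2*m*(y - y') = m * (x₁ - x₀) + f' x₁ - f' x₀ := by
      rw [hy, hy']
      field_simp
      ring
    have h6 : y + y' = 2*((f x₀ - f x₁ + f' x₁ * x₁ - f' x₀ * x₀ + m / 2 * (x₁ ^ 2 - x₀ ^ 2)) /
        (m * (x₁ - x₀) + f' x₁ - f' x₀)) := by
      rw [hy, hy']; ring
    have h3 : (f x₀ - f x₁ + f' x₁ * x₁ - f' x₀ * x₀ + m / 2 * (x₁ ^ 2 - x₀ ^ 2)) /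
        (m * (x₁ - x₀) + f' x₁ - f' x₀) * (m * (x₁ - x₀) + f' x₁ - f' x₀) =
        f x₀ - f x₁ + f' x₁ * x₁ - f' x₀ * x₀ + m / 2 * (x₁ ^ 2 - x₀ ^ 2) :=
      div_mul_cancel₀ _ hDne
    have hqy' : m/2*y'^2 + bq*y' + cq = f x₀ + f' x₀*(y' - x₀) - m/2*(y' - x₀)^2 := by
      rw [hb, hc]
      linear_combination ((y - y')/2) * h5 + ((m*(x₁-x₀)+f' x₁-f' x₀)/2) * h6 + h3
    have hhy' : 0 ≤ f y' - (m/2*y'^2 + bq*y' + cq) := by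
      rw [hqy']; linarith [key1 y' hy'm]
    have hyy0 : (0:ℝ) < y - y' := by linarith
    have ha : 0 ≤ (y - x)/(y - y') := div_nonneg (by linarith) hyy0.le
    have hb2 : 0 ≤ (x - y')/(y - y') := div_nonneg (by linarith [not_le.1 h1]) hyy0.le
    have hab : (y - x)/(y - y') + (x - y')/(y - y') = 1 := by
      rw [← add_div, div_eq_one_iff_eq hyy0.ne']; ring
    have hcomb : ((y - x)/(y - y')) • y' + ((x - y')/(y - y')) • y = x := by
      simp only [smul_eq_mul]
      field_simp
      ring
    have hcc := hconc.2 hy'm hym ha hb2 hab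
    rw [hcomb] at hcc
    simp only [smul_eq_mul] at hcc
    have p1 := mul_nonneg ha hhy'
    have p2 := mul_nonneg hb2 hhy
    have hfq : 0 ≤ f x - (m/2*x^2 + bq*x + cq) := by linarith [hcc, p1, p2]
    linarith [hphi, hfq]
  exact ⟨main, fun ⟨x, hxm, hfx⟩ => (main x hxm).ne' hfx⟩
end

section
/- Let x₀ < x₁, m > 0, and suppose f : [x₀,x₁] → ℝ is differentiable with f' Lipschitz of constant L ≤ m. If f has a root in [x₀, x₁], then the characteristic R = min{φ(x) : x ∈ [x₀,x₁]} of the interval satisfies R ≤ 0, where φ is the auxiliary function (11) built from f(x₀), f(x₁), f'(x₀), f'(x₁) and parameter m. -/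
set_option maxHeartbeats 2000000

open Set

private lemma hasDerivAt_poly (A B C t : ℝ) :
    HasDerivAt (fun u : ℝ => A * u ^ 2 + B * u + C) (2 * A * t + B) t := by
  have h1 : HasDerivAt (fun u : ℝ => u ^ 2) (2 * t) t := by
    simpa using hasDerivAt_pow 2 t
  have h := ((h1.const_mul A).add ((hasDerivAt_id' t).const_mul B)).add_const C
  exact h.congr_deriv (by ring)

private lemma anti_le (g g' : ℝ → ℝ) (a b : ℝ) (hab : a ≤ b)
    (hg : ∀ t ∈ Icc a b, HasDerivAt g (g' t) t)
    (h0 : ∀ t ∈ Ioo a b, g' t ≤ 0) : g b ≤ g a := by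
  have hA : AntitoneOn g (Icc a b) := by
    apply antitoneOn_of_deriv_nonpos (convex_Icc a b)
    · exact fun t ht => (hg t ht).continuousAt.continuousWithinAt
    · rw [interior_Icc]
      exact fun t ht => ((hg t (Ioo_subset_Icc_self ht)).differentiableAt).differentiableWithinAt
    · rw [interior_Icc]
      intro t ht
      rw [(hg t (Ioo_subset_Icc_self ht)).deriv]
      exact h0 t ht
  exact hA (left_mem_Icc.2 hab) (right_mem_Icc.2 hab) hab

private lemma seg_anti (f f' : ℝ → ℝ) (x₀ x₁ : ℝ)
    (hderiv : ∀ x ∈ Icc x₀ x₁, HasDerivAt f (f' x) x)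
    (a b A B C : ℝ) (hab : a ≤ b) (ha : x₀ ≤ a) (hb : b ≤ x₁)
    (hslope : ∀ t ∈ Ioo a b, f' t ≤ 2 * A * t + B) :
    f b - (A * b ^ 2 + B * b + C) ≤ f a - (A * a ^ 2 + B * a + C) := by
  have := anti_le (fun t => f t - (A * t ^ 2 + B * t + C))
      (fun t => f' t - (2 * A * t + B)) a b hab
      (fun t ht => (hderiv t ⟨le_trans ha ht.1, le_trans ht.2 hb⟩).sub (hasDerivAt_poly A B C t))
      (fun t ht => by simpa [sub_nonpos] using hslope t ht)
  simpa using this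

private lemma seg_mono (f f' : ℝ → ℝ) (x₀ x₁ : ℝ)
    (hderiv : ∀ x ∈ Icc x₀ x₁, HasDerivAt f (f' x) x)
    (a b A B C : ℝ) (hab : a ≤ b) (ha : x₀ ≤ a) (hb : b ≤ x₁)
    (hslope : ∀ t ∈ Ioo a b, 2 * A * t + B ≤ f' t) :
    f a - (A * a ^ 2 + B * a + C) ≤ f b - (A * b ^ 2 + B * b + C) := by
  have := anti_le (fun t => (A * t ^ 2 + B * t + C) - f t)
      (fun t => (2 * A * t + B) - f' t) a b hab
      (fun t ht => (hasDerivAt_poly A B C t).sub (hderiv t ⟨le_trans ha ht.1, le_trans ht.2 hb⟩))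
      (fun t ht => by simpa [sub_nonpos] using hslope t ht)
  have h2 : A * b ^ 2 + B * b + C - f b ≤ A * a ^ 2 + B * a + C - f a := this
  linarith

private lemma left_bd (f f' : ℝ → ℝ) (x₀ x₁ L m a : ℝ) (hm : L ≤ m)
    (hderiv : ∀ x ∈ Icc x₀ x₁, HasDerivAt f (f' x) x)
    (hlip : ∀ x ∈ Icc x₀ x₁, ∀ z ∈ Icc x₀ x₁, |f' x - f' z| ≤ L * |x - z|)
    (ha : a ∈ Icc x₀ x₁) :
    f x₀ + f' x₀ * (a - x₀) - m / 2 * (a - x₀) ^ 2 ≤ f a := by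
  have h := seg_mono f f' x₀ x₁ hderiv x₀ a (-(m/2)) (f' x₀ + m * x₀)
      (f x₀ - f' x₀ * x₀ - m / 2 * x₀ ^ 2) ha.1 le_rfl ha.2 ?_
  · nlinarith [h]
  · intro t ht
    have ht' : t ∈ Icc x₀ x₁ := ⟨le_of_lt ht.1, le_trans (le_of_lt ht.2) ha.2⟩
    have hl := hlip x₀ (left_mem_Icc.2 (le_trans ha.1 ha.2)) t ht'
    rw [abs_of_nonpos (by linarith [ht.1] : x₀ - t ≤ 0)] at hl
    have h1 : f' x₀ - f' t ≤ L * -(x₀ - t) := (abs_le.1 hl).2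
    have h2 : L * (t - x₀) ≤ m * (t - x₀) :=
      mul_le_mul_of_nonneg_right hm (by linarith [ht.1])
    nlinarith [h1, h2]

private lemma right_bd (f f' : ℝ → ℝ) (x₀ x₁ L m a : ℝ) (hm : L ≤ m)
    (hderiv : ∀ x ∈ Icc x₀ x₁, HasDerivAt f (f' x) x)
    (hlip : ∀ x ∈ Icc x₀ x₁, ∀ z ∈ Icc x₀ x₁, |f' x - f' z| ≤ L * |x - z|)
    (ha : a ∈ Icc x₀ x₁) :
    f x₁ - f' x₁ * (x₁ - a) - m / 2 * (x₁ - a) ^ 2 ≤ f a := by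
  have h := seg_anti f f' x₀ x₁ hderiv a x₁ (-(m/2)) (f' x₁ + m * x₁)
      (f x₁ - f' x₁ * x₁ - m / 2 * x₁ ^ 2) ha.2 ha.1 le_rfl ?_
  · nlinarith [h]
  · intro t ht
    have ht' : t ∈ Icc x₀ x₁ := ⟨le_trans ha.1 (le_of_lt ht.1), le_of_lt ht.2⟩
    have hl := hlip t ht' x₁ (right_mem_Icc.2 (le_trans ha.1 ha.2))
    rw [abs_of_nonpos (by linarith [ht.2] : t - x₁ ≤ 0)] at hl
    have h1 : f' t - f' x₁ ≤ L * -(t - x₁) := (abs_le.1 hl).2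
    have h2 : L * (x₁ - t) ≤ m * (x₁ - t) :=
      mul_le_mul_of_nonneg_right hm (by linarith [ht.2])
    nlinarith [h1, h2]

theorem root_implies_nonpositive_characteristic (f f' : ℝ → ℝ)
    (x₀ x₁ L m y y' bq cq : ℝ) (hx : x₀ < x₁) (hm0 : 0 < m)
    (hderiv : ∀ x ∈ Set.Icc x₀ x₁, HasDerivAt f (f' x) x)
    (hlip : ∀ x ∈ Set.Icc x₀ x₁, ∀ z ∈ Set.Icc x₀ x₁, |f' x - f' z| ≤ L * |x - z|)
    (hm : L ≤ m)
    (hy : y = (x₁ - x₀) / 4 + (f' x₁ - f' x₀) / (4 * m) +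
      (f x₀ - f x₁ + f' x₁ * x₁ - f' x₀ * x₀ + m / 2 * (x₁ ^ 2 - x₀ ^ 2)) /
        (m * (x₁ - x₀) + f' x₁ - f' x₀))
    (hy' : y' = -(x₁ - x₀) / 4 - (f' x₁ - f' x₀) / (4 * m) +
      (f x₀ - f x₁ + f' x₁ * x₁ - f' x₀ * x₀ + m / 2 * (x₁ ^ 2 - x₀ ^ 2)) /
        (m * (x₁ - x₀) + f' x₁ - f' x₀))
    (hb : bq = f' x₁ - 2 * m * y + m * x₁)
    (hc : cq = f x₁ - f' x₁ * x₁ - m / 2 * x₁ ^ 2 + m * y ^ 2)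
    (hroot : ∃ x ∈ Set.Icc x₀ x₁, f x = 0) :
    ∃ x ∈ Set.Icc x₀ x₁,
      (if x ≤ y' then f x₀ + f' x₀ * (x - x₀) - m / 2 * (x - x₀) ^ 2
       else if x ≤ y then m / 2 * x ^ 2 + bq * x + cq
       else f x₁ - f' x₁ * (x₁ - x) - m / 2 * (x₁ - x) ^ 2) ≤ 0 := by
  obtain ⟨r, hr, hfr⟩ := hroot
  refine ⟨r, hr, ?_⟩
  have hr0 : x₀ ≤ r := hr.1
  have hr1 : r ≤ x₁ := hr.2
  have hmne : m ≠ 0 := ne_of_gt hm0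
  split_ifs with h1 h2
  · have := left_bd f f' x₀ x₁ L m r hm hderiv hlip hr
    linarith
  · -- middle piece
    push_neg at h1
    obtain ⟨qx, hqx⟩ : ∃ q, q = f' x₁ - f' r + m * (x₁ - r) := ⟨_, rfl⟩
    obtain ⟨px, hpx⟩ : ∃ p, p = f' r - f' x₀ + m * (r - x₀) := ⟨_, rfl⟩
    -- Lipschitz facts
    have hlr := hlip x₁ (right_mem_Icc.2 (le_of_lt hx)) r hr
    rw [abs_of_nonneg (by linarith : (0:ℝ) ≤ x₁ - r)] at hlr
    have hq0 : 0 ≤ qx := by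
      have := (abs_le.1 hlr).1
      have h2' : L * (x₁ - r) ≤ m * (x₁ - r) := mul_le_mul_of_nonneg_right hm (by linarith)
      rw [hqx]; nlinarith
    have hq2 : qx ≤ 2 * m * (x₁ - r) := by
      have := (abs_le.1 hlr).2
      have h2' : L * (x₁ - r) ≤ m * (x₁ - r) := mul_le_mul_of_nonneg_right hm (by linarith)
      rw [hqx]; nlinarith
    have hll := hlip r hr x₀ (left_mem_Icc.2 (le_of_lt hx))
    rw [abs_of_nonneg (by linarith : (0:ℝ) ≤ r - x₀)] at hll
    have hp0 : 0 ≤ px := by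
      have := (abs_le.1 hll).1
      have h2' : L * (r - x₀) ≤ m * (r - x₀) := mul_le_mul_of_nonneg_right hm (by linarith)
      rw [hpx]; nlinarith
    have hp2 : px ≤ 2 * m * (r - x₀) := by
      have := (abs_le.1 hll).2
      have h2' : L * (r - x₀) ≤ m * (r - x₀) := mul_le_mul_of_nonneg_right hm (by linarith)
      rw [hpx]; nlinarith
    -- Δ identity
    have hΔ : 2 * m * (y - y') = m * (x₁ - x₀) + f' x₁ - f' x₀ := by
      rw [hy, hy']; field_simp; ring
    have hpq : px + qx = m * (x₁ - x₀) + f' x₁ - f' x₀ := by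
      rw [hpx, hqx]; ring
    -- identity: middle parabola = right parabola + m(x-y)^2
    have id1 : m / 2 * r ^ 2 + bq * r + cq
        = (f x₁ - f' x₁ * (x₁ - r) - m / 2 * (x₁ - r) ^ 2) + m * (r - y) ^ 2 := by
      rw [hb, hc]; ring
    by_cases hcase : 2 * m * (y - r) ≤ qx
    · -- use the right side
      obtain ⟨c, hcdef⟩ : ∃ c, c = r + qx / (2 * m) := ⟨_, rfl⟩
      have hc1 : r ≤ c := by
        have h := div_nonneg hq0 (by linarith : (0:ℝ) ≤ 2 * m)
        rw [hcdef]; linarith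
      have hc2 : c ≤ x₁ := by
        have h : qx / (2 * m) ≤ x₁ - r := by
          rw [div_le_iff₀ (by linarith : (0:ℝ) < 2 * m)]
          nlinarith
        rw [hcdef]; linarith
      have hseg := seg_anti f f' x₀ x₁ hderiv r c (m / 2)
          (f' x₁ + m * x₁ - qx - 2 * m * r)
          (f x₁ - f' x₁ * x₁ - m / 2 * x₁ ^ 2 + qx * r + m * r ^ 2)
          hc1 hr0 hc2 ?_
      · have hfc := right_bd f f' x₀ x₁ L m c hm hderiv hlip ⟨le_trans hr0 hc1, hc2⟩
        -- algebraic identity at c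
        have hH : ((m / 2) * r ^ 2 + (f' x₁ + m * x₁ - qx - 2 * m * r) * r
              + (f x₁ - f' x₁ * x₁ - m / 2 * x₁ ^ 2 + qx * r + m * r ^ 2))
            - ((m / 2) * c ^ 2 + (f' x₁ + m * x₁ - qx - 2 * m * r) * c
              + (f x₁ - f' x₁ * x₁ - m / 2 * x₁ ^ 2 + qx * r + m * r ^ 2))
            + (f x₁ - f' x₁ * (x₁ - c) - m / 2 * (x₁ - c) ^ 2)
            = (f x₁ - f' x₁ * (x₁ - r) - m / 2 * (x₁ - r) ^ 2) + qx ^ 2 / (4 * m) := by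
          rw [hcdef]; field_simp; ring
        have hkey : (f x₁ - f' x₁ * (x₁ - r) - m / 2 * (x₁ - r) ^ 2) + qx ^ 2 / (4 * m) ≤ f r := by
          linarith [hseg, hfc, hH]
        have hsq : m * (y - r) ^ 2 ≤ qx ^ 2 / (4 * m) := by
          rw [le_div_iff₀ (by linarith : (0:ℝ) < 4 * m)]
          have hyr0 : (0:ℝ) ≤ y - r := by linarith
          have hfac : (0:ℝ) ≤ (qx - 2 * m * (y - r)) * (qx + 2 * m * (y - r)) :=
            mul_nonneg (by linarith) (by nlinarith)
          nlinarith [hfac]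
        have hyr : (r - y) ^ 2 = (y - r) ^ 2 := by ring
        rw [id1, hyr]
        linarith [hkey, hsq]
      · intro t ht
        have ht' : t ∈ Icc x₀ x₁ := ⟨le_trans hr0 (le_of_lt ht.1), le_trans (le_of_lt ht.2) hc2⟩
        have hl := hlip t ht' r hr
        rw [abs_of_nonneg (by linarith [ht.1] : (0:ℝ) ≤ t - r)] at hl
        have h1' : f' t - f' r ≤ L * (t - r) := (abs_le.1 hl).2
        have h2' : L * (t - r) ≤ m * (t - r) := mul_le_mul_of_nonneg_right hm (by linarith [ht.1])
        rw [hqx]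
        nlinarith [h1', h2']
    · -- use the left side
      push_neg at hcase
      have hpx2 : 2 * m * (r - y') ≤ px := by linarith [hpq, hΔ, hcase]
      have hry' : 0 ≤ r - y' := le_of_lt (by linarith)
      obtain ⟨c, hcdef⟩ : ∃ c, c = r - px / (2 * m) := ⟨_, rfl⟩
      have hc1 : c ≤ r := by
        have h := div_nonneg hp0 (by linarith : (0:ℝ) ≤ 2 * m)
        rw [hcdef]; linarith
      have hc2 : x₀ ≤ c := by
        have h : px / (2 * m) ≤ r - x₀ := by
          rw [div_le_iff₀ (by linarith : (0:ℝ) < 2 * m)]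
          nlinarith
        rw [hcdef]; linarith
      have hseg := seg_mono f f' x₀ x₁ hderiv c r (m / 2)
          (f' x₀ + m * x₀ + px - 2 * m * r)
          (f x₀ - f' x₀ * x₀ - m / 2 * x₀ ^ 2 - px * r + m * r ^ 2)
          hc1 hc2 hr1 ?_
      · have hfc := left_bd f f' x₀ x₁ L m c hm hderiv hlip ⟨hc2, le_trans hc1 hr1⟩
        have hH : ((m / 2) * r ^ 2 + (f' x₀ + m * x₀ + px - 2 * m * r) * r
              + (f x₀ - f' x₀ * x₀ - m / 2 * x₀ ^ 2 - px * r + m * r ^ 2))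
            - ((m / 2) * c ^ 2 + (f' x₀ + m * x₀ + px - 2 * m * r) * c
              + (f x₀ - f' x₀ * x₀ - m / 2 * x₀ ^ 2 - px * r + m * r ^ 2))
            + (f x₀ + f' x₀ * (c - x₀) - m / 2 * (c - x₀) ^ 2)
            = (f x₀ + f' x₀ * (r - x₀) - m / 2 * (r - x₀) ^ 2) + px ^ 2 / (4 * m) := by
          rw [hcdef]; field_simp; ring
        have hkey : (f x₀ + f' x₀ * (r - x₀) - m / 2 * (r - x₀) ^ 2) + px ^ 2 / (4 * m) ≤ f r := by
          linarith [hseg, hfc, hH]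
        have hsq : m * (r - y') ^ 2 ≤ px ^ 2 / (4 * m) := by
          rw [le_div_iff₀ (by linarith : (0:ℝ) < 4 * m)]
          have hfac : (0:ℝ) ≤ (px - 2 * m * (r - y')) * (px + 2 * m * (r - y')) :=
            mul_nonneg (by linarith) (by nlinarith)
          nlinarith [hfac]
        -- bridging identity
        have hΔ0 : m * (x₁ - x₀) + f' x₁ - f' x₀ ≠ 0 := by
          rw [← hΔ]
          have : 0 < y - y' := by linarith
          positivity
        have idJ : (f x₀ + f' x₀ * (r - x₀) - m / 2 * (r - x₀) ^ 2) + m * (r - y') ^ 2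
            = (f x₁ - f' x₁ * (x₁ - r) - m / 2 * (x₁ - r) ^ 2) + m * (r - y) ^ 2 := by
          rw [hy, hy']
          field_simp
          ring
        have hyr : (r - y) ^ 2 = (y - r) ^ 2 := by ring
        rw [id1]
        linarith [hkey, hsq, idJ]
      · intro t ht
        have ht' : t ∈ Icc x₀ x₁ := ⟨le_trans hc2 (le_of_lt ht.1), le_trans (le_of_lt ht.2) hr1⟩
        have hl := hlip r hr t ht'
        rw [abs_of_nonneg (by linarith [ht.2] : (0:ℝ) ≤ r - t)] at hl
        have h1' : f' r - f' t ≤ L * (r - t) := (abs_le.1 hl).2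
        have h2' : L * (r - t) ≤ m * (r - t) := mul_le_mul_of_nonneg_right hm (by linarith [ht.2])
        rw [hpx]
        nlinarith [h1', h2']
  · have := right_bd f f' x₀ x₁ L m r hm hderiv hlip hr
    linarith
end
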